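/- arXiv:1805.08537 — 11 statements merged into one kernel-verified Lean document; each statement's English description precedes it below -/
import Mathlib

section
/- Let u₁, u₂, u₃, u₄, u₅ : ℝ → ℝ with u₃ continuous and u₁, u₂, u₄, u₅ differentiable, satisfying for all t ∈ ℝ: u₁′ = −u₃u₅, u₂′ = u₃u₄, u₄′ = u₂u₃, u₅′ = −u₁u₃. Let U(t) = ∫₀ᵗ u₃(τ) dτ. Then for all t ∈ ℝ: u₁(t) = ((u₁(0)+u₅(0))/2)·exp(−U(t)) + ((u₁(0)−u₅(0))/2)·exp(U(t)); u₂(t) = ((u₂(0)+u₄(0))/2)·exp(U(t)) + ((u₂(0)−u₄(0))/2)·exp(−U(t)); u₄(t) = ((u₂(0)+u₄(0))/2)·exp(U(t)) − ((u₂(0)−u₄(0))/2)·exp(−U(t)); u₅(t) = ((u₁(0)+u₅(0))/2)·exp(−U(t)) − ((u₁(0)−u₅(0))/2)·exp(U(t)). -/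
lemma stmt_2_aux (u₃ f : ℝ → ℝ) (c : ℝ) (hu₃c : Continuous u₃)
    (hf : ∀ t, HasDerivAt f (c * u₃ t * f t) t)
    (U : ℝ → ℝ) (hU : ∀ t, U t = ∫ τ in (0:ℝ)..t, u₃ τ) :
    ∀ t, f t = f 0 * Real.exp (c * U t) := by
  have hUf : U = fun t => ∫ τ in (0:ℝ)..t, u₃ τ := funext hU
  have hUd : ∀ t, HasDerivAt U (u₃ t) t := by
    intro t
    rw [hUf]
    exact (hu₃c.integral_hasStrictDerivAt 0 t).hasDerivAt
  have hU0 : U 0 = 0 := by simp [hU 0]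
  set h : ℝ → ℝ := fun t => f t * Real.exp (-(c * U t)) with hh
  have hd : ∀ t, HasDerivAt h 0 t := by
    intro t
    have he : HasDerivAt (fun t => Real.exp (-(c * U t)))
        (-(c * u₃ t) * Real.exp (-(c * U t))) t := by
      have := (((hUd t).const_mul c).neg).exp
      convert this using 1; rfl; simp only [Pi.neg_apply]; ring
    have := (hf t).mul he
    exact this.congr_deriv (by ring)
  have hconst : ∀ t, h t = h 0 := by
    intro t
    exact is_const_of_deriv_eq_zero (fun x => (hd x).differentiableAt)
      (fun x => (hd x).deriv) t 0
  intro t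
  have := hconst t
  simp only [hh, hU0, mul_zero, neg_zero, Real.exp_zero, mul_one] at this
  have hne : Real.exp (-(c * U t)) ≠ 0 := Real.exp_ne_zero _
  field_simp [Real.exp_neg] at this ⊢
  rw [← this, mul_assoc, ← Real.exp_add]; simp

/-- Expression of the extremal controls `u₁, u₂, u₄, u₅` via `U(t) = ∫₀ᵗ u₃`
and the initial values, for the vertical subsystem on SE(3) with `u₆ = 0`. -/
theorem stmt_2 (u₁ u₂ u₃ u₄ u₅ : ℝ → ℝ) (hu₃c : Continuous u₃)
    (h₁ : ∀ t, HasDerivAt u₁ (-(u₃ t * u₅ t)) t)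
    (h₂ : ∀ t, HasDerivAt u₂ (u₃ t * u₄ t) t)
    (h₄ : ∀ t, HasDerivAt u₄ (u₂ t * u₃ t) t)
    (h₅ : ∀ t, HasDerivAt u₅ (-(u₁ t * u₃ t)) t)
    (U : ℝ → ℝ) (hU : ∀ t, U t = ∫ τ in (0:ℝ)..t, u₃ τ) :
    ∀ t : ℝ,
      u₁ t = (u₁ 0 + u₅ 0) / 2 * Real.exp (-U t) + (u₁ 0 - u₅ 0) / 2 * Real.exp (U t) ∧
      u₂ t = (u₂ 0 + u₄ 0) / 2 * Real.exp (U t) + (u₂ 0 - u₄ 0) / 2 * Real.exp (-U t) ∧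
      u₄ t = (u₂ 0 + u₄ 0) / 2 * Real.exp (U t) - (u₂ 0 - u₄ 0) / 2 * Real.exp (-U t) ∧
      u₅ t = (u₁ 0 + u₅ 0) / 2 * Real.exp (-U t) - (u₁ 0 - u₅ 0) / 2 * Real.exp (U t) := by
  have A : ∀ t, (u₁ t + u₅ t) = (u₁ 0 + u₅ 0) * Real.exp ((-1) * U t) := by
    apply stmt_2_aux u₃ (fun t => u₁ t + u₅ t) (-1) hu₃c _ U hU
    intro t
    have := (h₁ t).add (h₅ t)
    exact this.congr_deriv (by ring)
  have B : ∀ t, (u₁ t - u₅ t) = (u₁ 0 - u₅ 0) * Real.exp ((1:ℝ) * U t) := by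
    apply stmt_2_aux u₃ (fun t => u₁ t - u₅ t) 1 hu₃c _ U hU
    intro t
    have := (h₁ t).sub (h₅ t)
    exact this.congr_deriv (by ring)
  have C : ∀ t, (u₂ t + u₄ t) = (u₂ 0 + u₄ 0) * Real.exp ((1:ℝ) * U t) := by
    apply stmt_2_aux u₃ (fun t => u₂ t + u₄ t) 1 hu₃c _ U hU
    intro t
    have := (h₂ t).add (h₄ t)
    exact this.congr_deriv (by ring)
  have D : ∀ t, (u₂ t - u₄ t) = (u₂ 0 - u₄ 0) * Real.exp ((-1) * U t) := by
    apply stmt_2_aux u₃ (fun t => u₂ t - u₄ t) (-1) hu₃c _ U hU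
    intro t
    have := (h₂ t).sub (h₄ t)
    exact this.congr_deriv (by ring)
  intro t
  have hA := A t; have hB := B t; have hC := C t; have hD := D t
  simp only [neg_one_mul, one_mul] at hA hB hC hD
  refine ⟨by linarith, by linarith, by linarith, by linarith⟩
end

section
/- Let u₁, u₂, u₃, u₄, u₅ : ℝ → ℝ with u₃ continuous and u₁, u₂, u₄, u₅ differentiable, satisfying for all t ∈ ℝ: u₁′ = −u₃u₅, u₂′ = u₃u₄, u₄′ = u₂u₃, u₅′ = −u₁u₃. Let U(t) = ∫₀ᵗ u₃(τ) dτ, A = (u₁(0)+u₅(0))² + (u₂(0)−u₄(0))², and B = (u₁(0)−u₅(0))² + (u₂(0)+u₄(0))². Then for all t ∈ ℝ: u₁(t)·u₅(t) − u₂(t)·u₄(t) = (1/4)·(A·exp(−2U(t)) − B·exp(2U(t))). -/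
/-- The combination `u₁u₅ - u₂u₄` expressed via `U(t) = ∫₀ᵗ u₃` and the constants
`A = (u₁(0)+u₅(0))² + (u₂(0)-u₄(0))²`, `B = (u₁(0)-u₅(0))² + (u₂(0)+u₄(0))²`. -/
theorem stmt_3 (u₁ u₂ u₃ u₄ u₅ : ℝ → ℝ) (hu₃c : Continuous u₃)
    (h₁ : ∀ t, HasDerivAt u₁ (-(u₃ t * u₅ t)) t)
    (h₂ : ∀ t, HasDerivAt u₂ (u₃ t * u₄ t) t)
    (h₄ : ∀ t, HasDerivAt u₄ (u₂ t * u₃ t) t)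
    (h₅ : ∀ t, HasDerivAt u₅ (-(u₁ t * u₃ t)) t)
    (U : ℝ → ℝ) (hU : ∀ t, U t = ∫ τ in (0:ℝ)..t, u₃ τ)
    (A B : ℝ)
    (hA : A = (u₁ 0 + u₅ 0) ^ 2 + (u₂ 0 - u₄ 0) ^ 2)
    (hB : B = (u₁ 0 - u₅ 0) ^ 2 + (u₂ 0 + u₄ 0) ^ 2) :
    ∀ t : ℝ,
      u₁ t * u₅ t - u₂ t * u₄ t
        = 1 / 4 * (A * Real.exp (-(2 * U t)) - B * Real.exp (2 * U t)) := by
  have hUfun : U = fun t => ∫ τ in (0:ℝ)..t, u₃ τ := funext hU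
  have hUd : ∀ t, HasDerivAt U (u₃ t) t := by
    intro t
    rw [hUfun]
    exact (hu₃c.integral_hasStrictDerivAt 0 t).hasDerivAt
  have hU0 : U 0 = 0 := by rw [hU]; simp
  -- F(t) = ((u₁+u₅)² + (u₂-u₄)²) * exp(2U) is constant
  have hFd : ∀ t, HasDerivAt
      (fun t => ((u₁ t + u₅ t) ^ 2 + (u₂ t - u₄ t) ^ 2) * Real.exp (2 * U t)) 0 t := by
    intro t
    have hp := ((h₁ t).fun_add (h₅ t)).fun_pow 2
    have hq := ((h₂ t).fun_sub (h₄ t)).fun_pow 2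
    have he := (((hUd t).const_mul 2)).exp
    have := (hp.fun_add hq).fun_mul he
    refine this.congr_deriv ?_
    ring
  have hGd : ∀ t, HasDerivAt
      (fun t => ((u₁ t - u₅ t) ^ 2 + (u₂ t + u₄ t) ^ 2) * Real.exp (-(2 * U t))) 0 t := by
    intro t
    have hp := ((h₁ t).fun_sub (h₅ t)).fun_pow 2
    have hq := ((h₂ t).fun_add (h₄ t)).fun_pow 2
    have he := (((hUd t).const_mul 2).neg).exp
    have := (hp.fun_add hq).fun_mul he
    refine this.congr_deriv ?_
    ring
  have hFconst := is_const_of_deriv_eq_zero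
    (f := fun t => ((u₁ t + u₅ t) ^ 2 + (u₂ t - u₄ t) ^ 2) * Real.exp (2 * U t))
    (fun t => (hFd t).differentiableAt) (fun t => (hFd t).deriv)
  have hGconst := is_const_of_deriv_eq_zero
    (f := fun t => ((u₁ t - u₅ t) ^ 2 + (u₂ t + u₄ t) ^ 2) * Real.exp (-(2 * U t)))
    (fun t => (hGd t).differentiableAt) (fun t => (hGd t).deriv)
  intro t
  have hF := hFconst t 0
  have hG := hGconst t 0
  simp only [hU0] at hF hG
  norm_num at hF hG
  have hexp1 : Real.exp (2 * U t) * Real.exp (-(2 * U t)) = 1 := by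
    rw [← Real.exp_add]; simp
  rw [hA, ← hF, hB, ← hG]
  nlinarith [hexp1, Real.exp_pos (2 * U t), Real.exp_pos (-(2 * U t))]
end

section
/- Let u₁, u₂, u₃, u₄, u₅ : ℝ → ℝ be differentiable functions satisfying for all t ∈ ℝ: u₁′ = −u₃u₅, u₂′ = u₃u₄, u₃′ = u₁u₅ − u₂u₄, u₄′ = u₂u₃, u₅′ = −u₁u₃. Let U(t) = ∫₀ᵗ u₃(τ) dτ, A = (u₁(0)+u₅(0))² + (u₂(0)−u₄(0))², and B = (u₁(0)−u₅(0))² + (u₂(0)+u₄(0))². Then U is twice differentiable and satisfies for all t ∈ ℝ the second-order autonomous ODE U″(t) = (A/4)·exp(−2U(t)) − (B/4)·exp(2U(t)), with U(0) = 0 and U′(0) = u₃(0). -/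
/-- The integral `U(t) = ∫₀ᵗ u₃` of the extremal control `u₃` satisfies the
second-order autonomous ODE `U'' = (A/4)e^{-2U} - (B/4)e^{2U}` with `U(0) = 0`,
`U'(0) = u₃(0)`. -/
theorem stmt_4 (u₁ u₂ u₃ u₄ u₅ : ℝ → ℝ)
    (h₁ : ∀ t, HasDerivAt u₁ (-(u₃ t * u₅ t)) t)
    (h₂ : ∀ t, HasDerivAt u₂ (u₃ t * u₄ t) t)
    (h₃ : ∀ t, HasDerivAt u₃ (u₁ t * u₅ t - u₂ t * u₄ t) t)
    (h₄ : ∀ t, HasDerivAt u₄ (u₂ t * u₃ t) t)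
    (h₅ : ∀ t, HasDerivAt u₅ (-(u₁ t * u₃ t)) t)
    (U : ℝ → ℝ) (hU : ∀ t, U t = ∫ τ in (0:ℝ)..t, u₃ τ)
    (A B : ℝ)
    (hA : A = (u₁ 0 + u₅ 0) ^ 2 + (u₂ 0 - u₄ 0) ^ 2)
    (hB : B = (u₁ 0 - u₅ 0) ^ 2 + (u₂ 0 + u₄ 0) ^ 2) :
    (∀ t, HasDerivAt U (u₃ t) t) ∧
    (∀ t, HasDerivAt (deriv U)
      (A / 4 * Real.exp (-(2 * U t)) - B / 4 * Real.exp (2 * U t)) t) ∧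
    U 0 = 0 ∧ deriv U 0 = u₃ 0 := by
  have hcont : Continuous u₃ :=
    continuous_iff_continuousAt.mpr fun x => (h₃ x).differentiableAt.continuousAt
  have hUeq : U = fun t => ∫ τ in (0:ℝ)..t, u₃ τ := funext hU
  have hdU : ∀ t, HasDerivAt U (u₃ t) t := by
    intro t
    rw [hUeq]
    exact (hcont.integral_hasStrictDerivAt 0 t).hasDerivAt
  have hU0 : U 0 = 0 := by rw [hU]; simp
  have hderivU : deriv U = u₃ := funext fun t => (hdU t).deriv
  -- P * exp(2U) is constant = A
  have hP : ∀ t, ((u₁ t + u₅ t) ^ 2 + (u₂ t - u₄ t) ^ 2) = A * Real.exp (-(2 * U t)) := by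
    have key : ∀ t, HasDerivAt
        (fun s => ((u₁ s + u₅ s) ^ 2 + (u₂ s - u₄ s) ^ 2) * Real.exp (2 * U s)) 0 t := by
      intro t
      have hE : HasDerivAt (fun s => Real.exp (2 * U s)) (Real.exp (2 * U t) * (2 * u₃ t)) t :=
        by have := (Real.hasDerivAt_exp (2 * U t)).comp t ((hdU t).const_mul 2); exact this
      have hPd : HasDerivAt (fun s => (u₁ s + u₅ s) ^ 2 + (u₂ s - u₄ s) ^ 2)
          ((2 : ℕ) * (u₁ t + u₅ t) ^ 1 * (-(u₃ t * u₅ t) + -(u₁ t * u₃ t)) +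
           (2 : ℕ) * (u₂ t - u₄ t) ^ 1 * (u₃ t * u₄ t - u₂ t * u₃ t)) t :=
        (((h₁ t).add (h₅ t)).pow 2).add (((h₂ t).sub (h₄ t)).pow 2)
      have := hPd.mul hE
      refine this.congr_deriv ?_
      push_cast
      ring
    have hc : ∀ t, ((u₁ t + u₅ t) ^ 2 + (u₂ t - u₄ t) ^ 2) * Real.exp (2 * U t)
        = ((u₁ 0 + u₅ 0) ^ 2 + (u₂ 0 - u₄ 0) ^ 2) * Real.exp (2 * U 0) := by
      intro t
      exact is_const_of_deriv_eq_zero (fun x => (key x).differentiableAt)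
        (fun x => (key x).deriv) t 0
    intro t
    have := hc t
    rw [hU0] at this
    simp only [mul_zero, Real.exp_zero, mul_one] at this
    rw [hA, ← this, Real.exp_neg]
    field_simp
  have hQ : ∀ t, ((u₁ t - u₅ t) ^ 2 + (u₂ t + u₄ t) ^ 2) = B * Real.exp (2 * U t) := by
    have key : ∀ t, HasDerivAt
        (fun s => ((u₁ s - u₅ s) ^ 2 + (u₂ s + u₄ s) ^ 2) * Real.exp (-(2 * U s))) 0 t := by
      intro t
      have hE : HasDerivAt (fun s => Real.exp (-(2 * U s)))
          (Real.exp (-(2 * U t)) * -(2 * u₃ t)) t :=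
        by have := (Real.hasDerivAt_exp (-(2 * U t))).comp t (((hdU t).const_mul 2).neg); exact this
      have hPd : HasDerivAt (fun s => (u₁ s - u₅ s) ^ 2 + (u₂ s + u₄ s) ^ 2)
          ((2 : ℕ) * (u₁ t - u₅ t) ^ 1 * (-(u₃ t * u₅ t) - -(u₁ t * u₃ t)) +
           (2 : ℕ) * (u₂ t + u₄ t) ^ 1 * (u₃ t * u₄ t + u₂ t * u₃ t)) t :=
        (((h₁ t).sub (h₅ t)).pow 2).add (((h₂ t).add (h₄ t)).pow 2)
      have := hPd.mul hE
      refine this.congr_deriv ?_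
      push_cast
      ring
    have hc : ∀ t, ((u₁ t - u₅ t) ^ 2 + (u₂ t + u₄ t) ^ 2) * Real.exp (-(2 * U t))
        = ((u₁ 0 - u₅ 0) ^ 2 + (u₂ 0 + u₄ 0) ^ 2) * Real.exp (-(2 * U 0)) := by
      intro t
      exact is_const_of_deriv_eq_zero (fun x => (key x).differentiableAt)
        (fun x => (key x).deriv) t 0
    intro t
    have := hc t
    rw [hU0] at this
    simp only [mul_zero, neg_zero, Real.exp_zero, mul_one] at this
    rw [hB, ← this, Real.exp_neg]
    field_simp
  refine ⟨hdU, ?_, hU0, hderivU ▸ rfl⟩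
  intro t
  rw [hderivU]
  have h := h₃ t
  have key : u₁ t * u₅ t - u₂ t * u₄ t
      = A / 4 * Real.exp (-(2 * U t)) - B / 4 * Real.exp (2 * U t) := by
    have e1 := hP t
    have e2 := hQ t
    nlinarith [e1, e2]
  rwa [key] at h
end

section
/- Let u₃₀, u₄₀, u₅₀ be real numbers, not all zero, set B₁ = u₄₀² + u₅₀² and b = √(u₃₀² + u₄₀² + u₅₀²). Then for every t ∈ ℝ the quantity (1/2)·[(1 + u₃₀/b)·exp(−bt) + (1 − u₃₀/b)·exp(bt)] is strictly positive, and the function U(t) = −ln((1/2)·[(1 + u₃₀/b)·exp(−bt) + (1 − u₃₀/b)·exp(bt)]) is twice differentiable on ℝ and satisfies U″(t) = −B₁·exp(2U(t)) for all t ∈ ℝ, together with U(0) = 0 and U′(0) = u₃₀. -/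
/-- Explicit solution of the IVP `U'' = -B₁ e^{2U}`, `U(0) = 0`, `U'(0) = u₃₀`
(the special case `A = 0`). -/
theorem stmt_5 (u₃₀ u₄₀ u₅₀ : ℝ)
    (hne : ¬(u₃₀ = 0 ∧ u₄₀ = 0 ∧ u₅₀ = 0))
    (B₁ b : ℝ)
    (hB₁ : B₁ = u₄₀ ^ 2 + u₅₀ ^ 2)
    (hb : b = Real.sqrt (u₃₀ ^ 2 + u₄₀ ^ 2 + u₅₀ ^ 2))
    (U : ℝ → ℝ)
    (hU : ∀ t, U t = -Real.log (1 / 2 *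
      ((1 + u₃₀ / b) * Real.exp (-(b * t)) + (1 - u₃₀ / b) * Real.exp (b * t)))) :
    (∀ t : ℝ, 0 < 1 / 2 *
      ((1 + u₃₀ / b) * Real.exp (-(b * t)) + (1 - u₃₀ / b) * Real.exp (b * t))) ∧
    (∀ t, DifferentiableAt ℝ U t) ∧
    (∀ t, DifferentiableAt ℝ (deriv U) t) ∧
    (∀ t, deriv (deriv U) t = -(B₁ * Real.exp (2 * U t))) ∧
    U 0 = 0 ∧ deriv U 0 = u₃₀ := by
  have hsum : 0 < u₃₀ ^ 2 + u₄₀ ^ 2 + u₅₀ ^ 2 := by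
    rcases lt_or_eq_of_le (by positivity : (0:ℝ) ≤ u₃₀ ^ 2 + u₄₀ ^ 2 + u₅₀ ^ 2) with h | h
    · exact h
    · exfalso; apply hne
      have h3 : u₃₀ ^ 2 = (0:ℝ) := by nlinarith [sq_nonneg u₃₀, sq_nonneg u₄₀, sq_nonneg u₅₀]
      have h4 : u₄₀ ^ 2 = (0:ℝ) := by nlinarith [sq_nonneg u₃₀, sq_nonneg u₄₀, sq_nonneg u₅₀]
      have h5 : u₅₀ ^ 2 = (0:ℝ) := by nlinarith [sq_nonneg u₃₀, sq_nonneg u₄₀, sq_nonneg u₅₀]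
      exact ⟨pow_eq_zero_iff two_ne_zero |>.mp h3, pow_eq_zero_iff two_ne_zero |>.mp h4,
        pow_eq_zero_iff two_ne_zero |>.mp h5⟩
  have hbpos : 0 < b := hb ▸ Real.sqrt_pos.mpr hsum
  have hbne : b ≠ 0 := hbpos.ne'
  have hb2 : b ^ 2 = u₃₀ ^ 2 + u₄₀ ^ 2 + u₅₀ ^ 2 := hb ▸ Real.sq_sqrt hsum.le
  have habs : u₃₀ ^ 2 ≤ b ^ 2 := by nlinarith [sq_nonneg u₄₀, sq_nonneg u₅₀]
  have hc₁ : 0 ≤ 1 + u₃₀ / b := by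
    rw [show 1 + u₃₀ / b = (b + u₃₀) / b by field_simp]
    apply div_nonneg _ hbpos.le
    nlinarith [sq_nonneg (b + u₃₀)]
  have hc₂ : 0 ≤ 1 - u₃₀ / b := by
    rw [show 1 - u₃₀ / b = (b - u₃₀) / b by field_simp]
    apply div_nonneg _ hbpos.le
    nlinarith [sq_nonneg (b - u₃₀)]
  set F : ℝ → ℝ := fun t => 1 / 2 *
      ((1 + u₃₀ / b) * Real.exp (-(b * t)) + (1 - u₃₀ / b) * Real.exp (b * t)) with hF
  set G : ℝ → ℝ := fun t => 1 / 2 *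
      ((1 + u₃₀ / b) * (Real.exp (-(b * t)) * (-b)) + (1 - u₃₀ / b) * (Real.exp (b * t) * b))
      with hG
  have hFpos : ∀ t, 0 < F t := by
    intro t
    rcases lt_or_eq_of_le hc₁ with h | h
    · have : 0 < (1 + u₃₀ / b) * Real.exp (-(b * t)) := by positivity
      have h2 : 0 ≤ (1 - u₃₀ / b) * Real.exp (b * t) := by positivity
      simp only [hF]; nlinarith
    · have hc₂' : 1 - u₃₀ / b = 2 := by linarith
      simp only [hF, ← h, hc₂']
      positivity
  have hdF : ∀ t, HasDerivAt F (G t) t := by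
    intro t
    have hbt : HasDerivAt (fun t : ℝ => b * t) b t := by
      simpa using (hasDerivAt_id t).const_mul b
    have h1 : HasDerivAt (fun t : ℝ => Real.exp (-(b * t))) (Real.exp (-(b * t)) * (-b)) t :=
      hbt.neg.exp
    have h2 : HasDerivAt (fun t : ℝ => Real.exp (b * t)) (Real.exp (b * t) * b) t := hbt.exp
    exact ((h1.const_mul _).add (h2.const_mul _)).const_mul _
  have hdG : ∀ t, HasDerivAt G (b ^ 2 * F t) t := by
    intro t
    have hbt : HasDerivAt (fun t : ℝ => b * t) b t := by
      simpa using (hasDerivAt_id t).const_mul b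
    have h1 : HasDerivAt (fun t : ℝ => Real.exp (-(b * t))) (Real.exp (-(b * t)) * (-b)) t :=
      hbt.neg.exp
    have h2 : HasDerivAt (fun t : ℝ => Real.exp (b * t)) (Real.exp (b * t) * b) t := hbt.exp
    have := (((h1.mul_const (-b)).const_mul (1 + u₃₀ / b)).add
      ((h2.mul_const b).const_mul (1 - u₃₀ / b))).const_mul (1/2 : ℝ)
    refine this.congr_deriv ?_
    simp only [hF]; ring
  have hUeq : U = fun t => -Real.log (F t) := funext hU
  have hdU : ∀ t, HasDerivAt U (-(G t / F t)) t := by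
    intro t
    rw [hUeq]
    exact ((hdF t).log (hFpos t).ne').neg
  have hderivU : deriv U = fun t => -(G t / F t) := funext fun t => (hdU t).deriv
  have hdU2 : ∀ t, HasDerivAt (deriv U)
      (-((b ^ 2 * F t * F t - G t * G t) / F t ^ 2)) t := by
    intro t
    rw [hderivU]
    exact (((hdG t).div (hdF t) (hFpos t).ne')).neg
  have hFG : ∀ t, b ^ 2 * F t * F t - G t * G t = B₁ := by
    intro t
    have hE : Real.exp (-(b * t)) * Real.exp (b * t) = 1 := by
      rw [← Real.exp_add]; simp
    have key : b ^ 2 * ((1 + u₃₀ / b) * (1 - u₃₀ / b)) = B₁ := by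
      field_simp
      linear_combination hb2 - hB₁
    calc b ^ 2 * F t * F t - G t * G t
        = b ^ 2 * ((1 + u₃₀ / b) * (1 - u₃₀ / b)) *
            (Real.exp (-(b * t)) * Real.exp (b * t)) := by
          simp only [hF, hG]; ring
      _ = B₁ := by rw [hE, key, mul_one]
  refine ⟨hFpos, fun t => (hdU t).differentiableAt, fun t => (hdU2 t).differentiableAt,
    ?_, ?_, ?_⟩
  · intro t
    rw [(hdU2 t).deriv, hFG t]
    have hexp : Real.exp (2 * U t) = ((F t) ^ 2)⁻¹ := by
      rw [hU t, show 2 * -Real.log (F t) = -Real.log (F t ^ 2) by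
        rw [Real.log_pow]; push_cast; ring,
        Real.exp_neg, Real.exp_log (pow_pos (hFpos t) 2)]
    rw [hexp]
    field_simp
  · rw [hU 0]
    norm_num
  · rw [hderivU]
    simp only [hG, hF, mul_zero, neg_zero, Real.exp_zero]
    field_simp
    rw [show b + u₃₀ + (b - u₃₀) = 2 * b by ring, neg_div', div_eq_iff (by positivity)]
    ring
end

section
/- Let u₁, u₂, u₃, u₄, u₅ : ℝ → ℝ be differentiable functions satisfying for all t ∈ ℝ: u₁′ = −u₃u₅, u₂′ = u₃u₄, u₃′ = u₁u₅ − u₂u₄, u₄′ = u₂u₃, u₅′ = −u₁u₃. Assume u₁(0) = −u₅(0), u₂(0) = u₄(0), and that (u₃(0), u₄(0), u₅(0)) ≠ (0,0,0). Set b = √(u₃(0)² + u₄(0)² + u₅(0)²). Then for all t ∈ ℝ: u₃(t) = [(b + u₃(0))·exp(−bt) − (b − u₃(0))·exp(bt)] / [(1 + u₃(0)/b)·exp(−bt) + (1 − u₃(0)/b)·exp(bt)]. -/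
lemma myConst6 (g : ℝ → ℝ) (hg : ∀ t, HasDerivAt g 0 t) (t : ℝ) : g t = g 0 :=
  is_const_of_deriv_eq_zero (fun x => (hg x).differentiableAt) (fun x => (hg x).deriv) t 0

lemma linZero6 (a y : ℝ → ℝ) (ha : Continuous a)
    (hy : ∀ t, HasDerivAt y (a t * y t) t) (h0 : y 0 = 0) : ∀ t, y t = 0 := by
  set U : ℝ → ℝ := fun t => ∫ s in (0:ℝ)..t, a s with hU_def
  have hU : ∀ t, HasDerivAt U (a t) t := by
    intro t
    exact intervalIntegral.integral_hasDerivAt_right ((ha.intervalIntegrable 0 t))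
      (ha.stronglyMeasurableAtFilter _ _) ha.continuousAt
  set g : ℝ → ℝ := fun t => y t * Real.exp (-(U t)) with hg_def
  have hg : ∀ t, HasDerivAt g 0 t := by
    intro t
    have := (hy t).mul (((hU t).neg).exp)
    refine this.congr_deriv ?_
    ring
  intro t
  have h := myConst6 g hg t
  simp only [hg_def] at h
  have hU0 : U 0 = 0 := by simp [hU_def]
  rw [h0, hU0] at h
  have hne := Real.exp_ne_zero (-(U t))
  simp only [zero_mul, mul_eq_zero] at h
  tauto

noncomputable def Mm6 (b c t : ℝ) : ℝ := (b + c) * Real.exp (-(b * t)) - (b - c) * Real.exp (b * t)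
noncomputable def Nn6 (b c t : ℝ) : ℝ := (b + c) * Real.exp (-(b * t)) + (b - c) * Real.exp (b * t)
noncomputable def ff6 (b c t : ℝ) : ℝ := b * Mm6 b c t / Nn6 b c t

lemma he1_6 (b : ℝ) (t : ℝ) :
    HasDerivAt (fun s : ℝ => Real.exp (-(b * s))) (Real.exp (-(b * t)) * (-b)) t := by
  have h0 : HasDerivAt (fun s : ℝ => -(b * s)) (-b) t := by
    exact ((hasDerivAt_id t).const_mul b).neg.congr_deriv (by ring)
  exact h0.exp

lemma he2_6 (b : ℝ) (t : ℝ) :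
    HasDerivAt (fun s : ℝ => Real.exp (b * s)) (Real.exp (b * t) * b) t := by
  have h0 : HasDerivAt (fun s : ℝ => b * s) b t := by
    simpa using (hasDerivAt_id t).const_mul b
  exact h0.exp

lemma hM6 (b c t : ℝ) : HasDerivAt (fun s => Mm6 b c s) (-b * Nn6 b c t) t := by
  have H := ((he1_6 b t).const_mul (b + c)).sub ((he2_6 b t).const_mul (b - c))
  refine H.congr_deriv ?_
  unfold Nn6
  ring

lemma hN6 (b c t : ℝ) : HasDerivAt (fun s => Nn6 b c s) (-b * Mm6 b c t) t := by
  have H := ((he1_6 b t).const_mul (b + c)).add ((he2_6 b t).const_mul (b - c))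
  refine H.congr_deriv ?_
  unfold Mm6
  ring

lemma hNpos6 (b c : ℝ) (hb : 0 < b) (h1 : 0 ≤ b + c) (h2 : 0 ≤ b - c) (t : ℝ) :
    0 < Nn6 b c t := by
  have ha : 0 ≤ (b + c) * Real.exp (-(b * t)) := mul_nonneg h1 (Real.exp_pos _).le
  have hb' : 0 ≤ (b - c) * Real.exp (b * t) := mul_nonneg h2 (Real.exp_pos _).le
  have hcases : 0 < b + c ∨ 0 < b - c := by
    by_contra hcon; push_neg at hcon; linarith [hcon.1, hcon.2]
  unfold Nn6
  rcases hcases with h | h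
  · have := mul_pos h (Real.exp_pos (-(b * t))); linarith
  · have := mul_pos h (Real.exp_pos (b * t)); linarith

lemma hf6 (b c : ℝ) (hb : 0 < b) (h1 : 0 ≤ b + c) (h2 : 0 ≤ b - c) (t : ℝ) :
    HasDerivAt (fun s => ff6 b c s) (ff6 b c t ^ 2 - b ^ 2) t := by
  have hNe : Nn6 b c t ≠ 0 := (hNpos6 b c hb h1 h2 t).ne'
  have H := ((hM6 b c t).const_mul b).div (hN6 b c t) hNe
  have heq : (b * (-b * Nn6 b c t) * Nn6 b c t - b * Mm6 b c t * (-b * Mm6 b c t)) / Nn6 b c t ^ 2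
      = ff6 b c t ^ 2 - b ^ 2 := by
    unfold ff6
    field_simp
    have : Mm6 b c t ^ 2 - Nn6 b c t ^ 2 = -(4 * (b ^ 2 - c ^ 2)) * (Real.exp (-(b*t)) * Real.exp (b*t)) := by
      unfold Mm6 Nn6; ring
    ring
  rw [heq] at H
  exact H.congr_deriv rfl

lemma hf06 (b c : ℝ) (hb : 0 < b) : ff6 b c 0 = c := by
  unfold ff6 Mm6 Nn6
  simp only [mul_zero, neg_zero, Real.exp_zero, mul_one]
  have hb' : b ≠ 0 := hb.ne'
  field_simp
  ring_nf; field_simp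

/-- Explicit formula for the extremal control `u₃` in the special case
`A = 0`, i.e. `u₁(0) = -u₅(0)`, `u₂(0) = u₄(0)`. -/
theorem stmt_6 (u₁ u₂ u₃ u₄ u₅ : ℝ → ℝ)
    (h₁ : ∀ t, HasDerivAt u₁ (-(u₃ t * u₅ t)) t)
    (h₂ : ∀ t, HasDerivAt u₂ (u₃ t * u₄ t) t)
    (h₃ : ∀ t, HasDerivAt u₃ (u₁ t * u₅ t - u₂ t * u₄ t) t)
    (h₄ : ∀ t, HasDerivAt u₄ (u₂ t * u₃ t) t)
    (h₅ : ∀ t, HasDerivAt u₅ (-(u₁ t * u₃ t)) t)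
    (hA₁ : u₁ 0 = -u₅ 0) (hA₂ : u₂ 0 = u₄ 0)
    (hne : ¬(u₃ 0 = 0 ∧ u₄ 0 = 0 ∧ u₅ 0 = 0))
    (b : ℝ) (hb : b = Real.sqrt ((u₃ 0) ^ 2 + (u₄ 0) ^ 2 + (u₅ 0) ^ 2)) :
    ∀ t : ℝ,
      u₃ t = ((b + u₃ 0) * Real.exp (-(b * t)) - (b - u₃ 0) * Real.exp (b * t)) /
        ((1 + u₃ 0 / b) * Real.exp (-(b * t)) + (1 - u₃ 0 / b) * Real.exp (b * t)) := by
  have hpos : 0 < (u₃ 0) ^ 2 + (u₄ 0) ^ 2 + (u₅ 0) ^ 2 := by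
    rcases (by tauto : u₃ 0 ≠ 0 ∨ u₄ 0 ≠ 0 ∨ u₅ 0 ≠ 0) with h | h | h <;> positivity
  have hbpos : 0 < b := by rw [hb]; exact Real.sqrt_pos.mpr hpos
  have hb2 : b ^ 2 = (u₃ 0) ^ 2 + (u₄ 0) ^ 2 + (u₅ 0) ^ 2 := by
    rw [hb]; exact Real.sq_sqrt hpos.le
  have hu₃d : Differentiable ℝ u₃ := fun t => (h₃ t).differentiableAt
  have hu₃c : Continuous u₃ := hu₃d.continuous
  -- conservation law
  have hE : ∀ t, u₃ t ^ 2 + u₄ t ^ 2 + u₅ t ^ 2 = (u₃ 0) ^ 2 + (u₄ 0) ^ 2 + (u₅ 0) ^ 2 := by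
    intro t
    apply myConst6 (fun t => u₃ t ^ 2 + u₄ t ^ 2 + u₅ t ^ 2)
    intro s
    have H := (((h₃ s).pow 2).add ((h₄ s).pow 2)).add ((h₅ s).pow 2)
    refine H.congr_deriv ?_
    push_cast
    ring
  -- u₁ + u₅ = 0
  have h15 : ∀ t, u₁ t + u₅ t = 0 := by
    apply linZero6 (fun t => -u₃ t) _ hu₃c.neg
    · intro t
      have H := (h₁ t).add (h₅ t)
      refine H.congr_deriv ?_
      ring
    · rw [hA₁]; ring
  -- u₂ - u₄ = 0
  have h24 : ∀ t, u₂ t - u₄ t = 0 := by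
    apply linZero6 (fun t => -u₃ t) _ hu₃c.neg
    · intro t
      have H := (h₂ t).sub (h₄ t)
      refine H.congr_deriv ?_
      ring
    · rw [hA₂]; ring
  -- the Riccati equation for u₃
  have hu₃' : ∀ t, HasDerivAt u₃ (u₃ t ^ 2 - b ^ 2) t := by
    intro t
    have key : u₁ t * u₅ t - u₂ t * u₄ t = u₃ t ^ 2 - b ^ 2 := by
      linear_combination (u₅ t) * (h15 t) - (u₄ t) * (h24 t) - (hE t) + hb2
    exact key ▸ h₃ t
  have hbc1 : 0 ≤ b + u₃ 0 := by nlinarith [sq_nonneg (u₄ 0), sq_nonneg (u₅ 0)]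
  have hbc2 : 0 ≤ b - u₃ 0 := by nlinarith [sq_nonneg (u₄ 0), sq_nonneg (u₅ 0)]
  have hf' := hf6 b (u₃ 0) hbpos hbc1 hbc2
  have hfd : Differentiable ℝ (fun s => ff6 b (u₃ 0) s) := fun t => (hf' t).differentiableAt
  have hfc : Continuous (fun s => ff6 b (u₃ 0) s) := hfd.continuous
  -- uniqueness: u₃ = ff6
  have hd : ∀ t, u₃ t - ff6 b (u₃ 0) t = 0 := by
    apply linZero6 (fun t => u₃ t + ff6 b (u₃ 0) t) _ (hu₃c.add hfc)
    · intro t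
      have H := (hu₃' t).sub (hf' t)
      refine H.congr_deriv ?_
      ring
    · rw [hf06 b (u₃ 0) hbpos]; ring
  intro t
  have hu : u₃ t = ff6 b (u₃ 0) t := by have := hd t; linarith
  rw [hu]
  have hD : (1 + u₃ 0 / b) * Real.exp (-(b * t)) + (1 - u₃ 0 / b) * Real.exp (b * t)
      = Nn6 b (u₃ 0) t / b := by
    unfold Nn6
    field_simp
    try ring
  rw [hD]
  unfold ff6 Mm6
  rw [div_div_eq_mul_div]
  ring
end

section
/- Let u₃₀, u₄₀, u₅₀ be real numbers, not all zero, set B₁ = u₄₀² + u₅₀² and b = √(u₃₀² + u₄₀² + u₅₀²). Then for every t ∈ ℝ the quantity (1/2)·[(1 + u₃₀/b)·exp(bt) + (1 − u₃₀/b)·exp(−bt)] is strictly positive, and the function U(t) = ln((1/2)·[(1 + u₃₀/b)·exp(bt) + (1 − u₃₀/b)·exp(−bt)]) is twice differentiable on ℝ and satisfies U″(t) = B₁·exp(−2U(t)) for all t ∈ ℝ, together with U(0) = 0 and U′(0) = u₃₀. -/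
/-- Explicit solution of the IVP `U'' = B₁ e^{-2U}`, `U(0) = 0`, `U'(0) = u₃₀`
(the special case `B = 0`). -/
theorem stmt_7 (u₃₀ u₄₀ u₅₀ : ℝ)
    (hne : ¬(u₃₀ = 0 ∧ u₄₀ = 0 ∧ u₅₀ = 0))
    (B₁ b : ℝ)
    (hB₁ : B₁ = u₄₀ ^ 2 + u₅₀ ^ 2)
    (hb : b = Real.sqrt (u₃₀ ^ 2 + u₄₀ ^ 2 + u₅₀ ^ 2))
    (U : ℝ → ℝ)
    (hU : ∀ t, U t = Real.log (1 / 2 *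
      ((1 + u₃₀ / b) * Real.exp (b * t) + (1 - u₃₀ / b) * Real.exp (-(b * t))))) :
    (∀ t : ℝ, 0 < 1 / 2 *
      ((1 + u₃₀ / b) * Real.exp (b * t) + (1 - u₃₀ / b) * Real.exp (-(b * t)))) ∧
    (∀ t, DifferentiableAt ℝ U t) ∧
    (∀ t, DifferentiableAt ℝ (deriv U) t) ∧
    (∀ t, deriv (deriv U) t = B₁ * Real.exp (-(2 * U t))) ∧
    U 0 = 0 ∧ deriv U 0 = u₃₀ := by
  have hS : 0 < u₃₀ ^ 2 + u₄₀ ^ 2 + u₅₀ ^ 2 := by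
    rcases lt_or_eq_of_le (by positivity : (0:ℝ) ≤ u₃₀ ^ 2 + u₄₀ ^ 2 + u₅₀ ^ 2) with h | h
    · exact h
    · exfalso; apply hne
      refine ⟨?_, ?_, ?_⟩ <;>
        nlinarith [sq_nonneg u₃₀, sq_nonneg u₄₀, sq_nonneg u₅₀]
  have hbpos : 0 < b := by rw [hb]; exact Real.sqrt_pos.mpr hS
  have hb2 : b ^ 2 = u₃₀ ^ 2 + u₄₀ ^ 2 + u₅₀ ^ 2 := by rw [hb]; exact Real.sq_sqrt hS.le
  set A := 1 + u₃₀ / b with hAdef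
  set C := 1 - u₃₀ / b with hCdef
  have hu2 : u₃₀ ^ 2 ≤ b ^ 2 := by nlinarith [sq_nonneg u₄₀, sq_nonneg u₅₀]
  have hub1 : -b ≤ u₃₀ := by nlinarith [sq_nonneg (u₃₀ + b)]
  have hub2 : u₃₀ ≤ b := by nlinarith [sq_nonneg (u₃₀ - b)]
  have hA0 : 0 ≤ A := by
    rw [hAdef]
    have : -1 ≤ u₃₀ / b := (le_div_iff₀ hbpos).mpr (by linarith)
    linarith
  have hC0 : 0 ≤ C := by
    rw [hCdef]
    have : u₃₀ / b ≤ 1 := (div_le_one hbpos).mpr hub2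
    linarith
  have hACsum : A + C = 2 := by rw [hAdef, hCdef]; ring
  set g : ℝ → ℝ := fun t => 1 / 2 * (A * Real.exp (b * t) + C * Real.exp (-(b * t)))
    with hgdef
  have hgpos : ∀ t, 0 < g t := by
    intro t
    simp only [hgdef]
    rcases lt_or_eq_of_le hA0 with h | h
    · have h1 := mul_pos h (Real.exp_pos (b * t))
      have h2 := mul_nonneg hC0 (Real.exp_pos (-(b * t))).le
      clear_value A C
      linarith
    · have hC2 : C = 2 := by linarith
      have := Real.exp_pos (-(b * t))
      rw [← h, hC2]
      clear_value A C
      linarith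
  have hUg : U = fun t => Real.log (g t) := funext fun t => by rw [hU t, hgdef]
  subst hUg
  set N : ℝ → ℝ := fun t =>
      1 / 2 * (A * (b * Real.exp (b * t)) - C * (b * Real.exp (-(b * t)))) with hNdef
  have hbt : ∀ t : ℝ, HasDerivAt (fun s : ℝ => b * s) b t := by
    intro t
    simpa using (hasDerivAt_id t).const_mul b
  have hgd : ∀ t, HasDerivAt g (N t) t := by
    intro t
    have h2 := (hbt t).exp
    have h3 := (hbt t).neg.exp
    have h4 := ((h2.const_mul A).add (h3.const_mul C)).const_mul (1 / 2 : ℝ)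
    convert h4 using 1
    · rfl
    · rfl
    · rfl
    rw [hNdef]; simp only [Pi.neg_apply]; ring
  have hNd : ∀ t, HasDerivAt N (b ^ 2 * g t) t := by
    intro t
    have h2 := (hbt t).exp
    have h3 := (hbt t).neg.exp
    have h4 := (((h2.const_mul b).const_mul A).sub
      ((h3.const_mul b).const_mul C)).const_mul (1 / 2 : ℝ)
    convert h4 using 1
    · rfl
    · rfl
    · rfl
    rw [hgdef]; simp only [Pi.neg_apply]; ring
  have hdU : ∀ t, HasDerivAt (fun t => Real.log (g t)) (N t / g t) t := by
    intro t
    exact (hgd t).log (hgpos t).ne'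
  have hderivU : deriv (fun t => Real.log (g t)) = fun t => N t / g t :=
    funext fun t => (hdU t).deriv
  have hd2 : ∀ t, HasDerivAt (fun t => N t / g t)
      ((b ^ 2 * g t * g t - N t * N t) / g t ^ 2) t := by
    intro t
    exact (hNd t).div (hgd t) (hgpos t).ne'
  have hef : ∀ t : ℝ, Real.exp (b * t) * Real.exp (-(b * t)) = 1 := by
    intro t; rw [← Real.exp_add]; simp
  have hAC : b ^ 2 * A * C = B₁ := by
    rw [hAdef, hCdef, hB₁]
    field_simp
    nlinarith
  have hnum : ∀ t, b ^ 2 * g t * g t - N t * N t = B₁ := by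
    intro t
    rw [hgdef, hNdef]
    simp only
    linear_combination (b ^ 2 * A * C) * hef t + hAC
  refine ⟨hgpos, fun t => (hdU t).differentiableAt, ?_, ?_, ?_, ?_⟩
  · intro t
    rw [hderivU]
    exact (hd2 t).differentiableAt
  · intro t
    rw [hderivU, (hd2 t).deriv, hnum t]
    have hexp : Real.exp (-(2 * Real.log (g t))) = (g t ^ 2)⁻¹ := by
      rw [Real.exp_neg]
      congr 1
      rw [show (2 : ℝ) * Real.log (g t) = Real.log (g t ^ 2) by
        rw [Real.log_pow]; push_cast; ring]
      exact Real.exp_log (pow_pos (hgpos t) 2)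
    rw [hexp, div_eq_mul_inv]
  · have hg0 : g 0 = 1 := by
      simp only [hgdef]
      norm_num [Real.exp_zero]
      linarith
    show Real.log (g 0) = 0
    rw [hg0, Real.log_one]
  · have hg0 : g 0 = 1 := by
      simp only [hgdef]
      norm_num [Real.exp_zero]
      linarith
    have hN0 : N 0 = u₃₀ := by
      simp only [hNdef]
      norm_num [Real.exp_zero]
      rw [hAdef, hCdef]
      field_simp
      ring
    rw [hderivU]
    show N 0 / g 0 = u₃₀
    rw [hg0, hN0, div_one]
end

section
/- Let u₁, u₂, u₃, u₄, u₅ : ℝ → ℝ be differentiable functions satisfying for all t ∈ ℝ: u₁′ = −u₃u₅, u₂′ = u₃u₄, u₃′ = u₁u₅ − u₂u₄, u₄′ = u₂u₃, u₅′ = −u₁u₃. Assume u₁(0) = u₅(0), u₂(0) = −u₄(0), and that (u₃(0), u₄(0), u₅(0)) ≠ (0,0,0). Set b = √(u₃(0)² + u₄(0)² + u₅(0)²). Then for all t ∈ ℝ: u₃(t) = [(b + u₃(0))·exp(bt) − (b − u₃(0))·exp(−bt)] / [(1 + u₃(0)/b)·exp(bt) + (1 − u₃(0)/b)·exp(−bt)].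 -/
open Real

/-- If `f' = g·f` with `f 0 = 0` and `g` continuous, then `f ≡ 0`. -/
private lemma vanish (f g : ℝ → ℝ) (hg : Continuous g)
    (hf : ∀ t, HasDerivAt f (g t * f t) t) (h0 : f 0 = 0) : ∀ t, f t = 0 := by
  set U : ℝ → ℝ := fun t => ∫ s in (0:ℝ)..t, g s with hUdef
  have hUd : ∀ t, HasDerivAt U (g t) t := fun t =>
    intervalIntegral.integral_hasDerivAt_right (hg.intervalIntegrable 0 t)
      hg.aestronglyMeasurable.stronglyMeasurableAtFilter hg.continuousAt
  set F : ℝ → ℝ := fun t => f t * Real.exp (-(U t)) with hFdef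
  have hFd : ∀ t, HasDerivAt F 0 t := by
    intro t
    have h1 : HasDerivAt (fun t => Real.exp (-(U t))) (Real.exp (-(U t)) * (-(g t))) t :=
      ((hUd t).neg).exp
    have := (hf t).mul h1
    refine this.congr_deriv ?_
    ring
  have hFc : ∀ t, F t = F 0 := fun t =>
    is_const_of_deriv_eq_zero (fun x => (hFd x).differentiableAt)
      (fun x => (hFd x).deriv) t 0
  intro t
  have h := hFc t
  have h0' : F 0 = 0 := by simp [hFdef, h0]
  rw [h0'] at h
  rcases mul_eq_zero.mp h with h' | h'
  · exact h'
  · exact absurd h' (Real.exp_ne_zero _)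

/-- Explicit formula for the extremal control `u₃` in the special case
`B = 0`, i.e. `u₁(0) = u₅(0)`, `u₂(0) = -u₄(0)`. -/
theorem stmt_8 (u₁ u₂ u₃ u₄ u₅ : ℝ → ℝ)
    (h₁ : ∀ t, HasDerivAt u₁ (-(u₃ t * u₅ t)) t)
    (h₂ : ∀ t, HasDerivAt u₂ (u₃ t * u₄ t) t)
    (h₃ : ∀ t, HasDerivAt u₃ (u₁ t * u₅ t - u₂ t * u₄ t) t)
    (h₄ : ∀ t, HasDerivAt u₄ (u₂ t * u₃ t) t)
    (h₅ : ∀ t, HasDerivAt u₅ (-(u₁ t * u₃ t)) t)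
    (hB₁ : u₁ 0 = u₅ 0) (hB₂ : u₂ 0 = -u₄ 0)
    (hne : ¬(u₃ 0 = 0 ∧ u₄ 0 = 0 ∧ u₅ 0 = 0))
    (b : ℝ) (hb : b = Real.sqrt ((u₃ 0) ^ 2 + (u₄ 0) ^ 2 + (u₅ 0) ^ 2)) :
    ∀ t : ℝ,
      u₃ t = ((b + u₃ 0) * Real.exp (b * t) - (b - u₃ 0) * Real.exp (-(b * t))) /
        ((1 + u₃ 0 / b) * Real.exp (b * t) + (1 - u₃ 0 / b) * Real.exp (-(b * t))) := by
  have hu₃c : Continuous u₃ :=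
    continuous_iff_continuousAt.mpr fun t => (h₃ t).continuousAt
  -- b > 0 and b² equals the conserved sum at 0
  have hsum : 0 < u₃ 0 ^ 2 + u₄ 0 ^ 2 + u₅ 0 ^ 2 := by
    by_contra hc
    push_neg at hc
    have e3 : u₃ 0 ^ 2 = 0 := le_antisymm (by nlinarith [sq_nonneg (u₄ 0), sq_nonneg (u₅ 0)]) (sq_nonneg _)
    have e4 : u₄ 0 ^ 2 = 0 := le_antisymm (by nlinarith [sq_nonneg (u₃ 0), sq_nonneg (u₅ 0)]) (sq_nonneg _)
    have e5 : u₅ 0 ^ 2 = 0 := le_antisymm (by nlinarith [sq_nonneg (u₃ 0), sq_nonneg (u₄ 0)]) (sq_nonneg _)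
    exact hne ⟨pow_eq_zero_iff (n := 2) (by norm_num) |>.mp e3,
      pow_eq_zero_iff (n := 2) (by norm_num) |>.mp e4,
      pow_eq_zero_iff (n := 2) (by norm_num) |>.mp e5⟩
  have hbpos : 0 < b := by rw [hb]; exact Real.sqrt_pos.mpr hsum
  have hb2 : b ^ 2 = u₃ 0 ^ 2 + u₄ 0 ^ 2 + u₅ 0 ^ 2 := by
    rw [hb, sq, Real.mul_self_sqrt hsum.le]
  -- u₁ = u₅ and u₂ = -u₄ for all time
  have hp : ∀ t, u₁ t - u₅ t = 0 := by
    apply vanish (fun t => u₁ t - u₅ t) u₃ hu₃c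
    · intro t
      have := (h₁ t).sub (h₅ t)
      refine this.congr_deriv ?_
      ring
    · rw [hB₁]; ring
  have hq : ∀ t, u₂ t + u₄ t = 0 := by
    apply vanish (fun t => u₂ t + u₄ t) u₃ hu₃c
    · intro t
      have := (h₂ t).add (h₄ t)
      refine this.congr_deriv ?_
      ring
    · rw [hB₂]; ring
  have hu₁ : ∀ t, u₁ t = u₅ t := fun t => by have := hp t; linarith
  have hu₂ : ∀ t, u₂ t = -u₄ t := fun t => by have := hq t; linarith
  -- conserved quantity
  have hS : ∀ t, u₃ t ^ 2 + u₄ t ^ 2 + u₅ t ^ 2 = b ^ 2 := by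
    have hSd : ∀ t, HasDerivAt (fun t => u₃ t ^ 2 + u₄ t ^ 2 + u₅ t ^ 2) 0 t := by
      intro t
      have := (((h₃ t).pow 2).add ((h₄ t).pow 2)).add ((h₅ t).pow 2)
      refine this.congr_deriv ?_
      ring
    intro t
    have := is_const_of_deriv_eq_zero (f := fun t => u₃ t ^ 2 + u₄ t ^ 2 + u₅ t ^ 2)
      (fun x => (hSd x).differentiableAt) (fun x => (hSd x).deriv) t 0
    rw [this, hb2]
  -- u₃' = b² - u₃²
  have hy' : ∀ t, HasDerivAt u₃ (b ^ 2 - u₃ t ^ 2) t := by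
    intro t
    have := h₃ t
    have he : u₁ t * u₅ t - u₂ t * u₄ t = b ^ 2 - u₃ t ^ 2 := by
      rw [hu₁ t, hu₂ t]
      linear_combination hS t
    rwa [he] at this
  -- |u₃ 0| ≤ b
  have ha1 : 0 ≤ b + u₃ 0 := by nlinarith [sq_nonneg (u₄ 0), sq_nonneg (u₅ 0), sq_nonneg (b + u₃ 0)]
  have ha2 : 0 ≤ b - u₃ 0 := by nlinarith [sq_nonneg (u₄ 0), sq_nonneg (u₅ 0), sq_nonneg (b - u₃ 0)]
  set a := u₃ 0 with hadef
  set N : ℝ → ℝ := fun t => (b + a) * Real.exp (b * t) - (b - a) * Real.exp (-(b * t)) with hNdef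
  set D : ℝ → ℝ := fun t => (1 + a / b) * Real.exp (b * t) + (1 - a / b) * Real.exp (-(b * t))
    with hDdef
  have hexp1 : ∀ t : ℝ, HasDerivAt (fun t : ℝ => Real.exp (b * t)) (Real.exp (b * t) * b) t := by
    intro t
    simpa using ((hasDerivAt_id t).const_mul b).exp
  have hexp2 : ∀ t : ℝ, HasDerivAt (fun t : ℝ => Real.exp (-(b * t)))
      (Real.exp (-(b * t)) * (-b)) t := by
    intro t
    simpa using (((hasDerivAt_id t).const_mul b).neg).exp
  have hN' : ∀ t, HasDerivAt N ((b + a) * (Real.exp (b * t) * b) -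
      (b - a) * (Real.exp (-(b * t)) * (-b))) t := fun t =>
    ((hexp1 t).const_mul (b + a)).sub ((hexp2 t).const_mul (b - a))
  have hD' : ∀ t, HasDerivAt D ((1 + a / b) * (Real.exp (b * t) * b) +
      (1 - a / b) * (Real.exp (-(b * t)) * (-b))) t := fun t =>
    ((hexp1 t).const_mul (1 + a / b)).add ((hexp2 t).const_mul (1 - a / b))
  -- w = u₃·D - N vanishes identically
  have hw : ∀ t, u₃ t * D t - N t = 0 := by
    apply vanish (fun t => u₃ t * D t - N t) (fun t => -u₃ t) (hu₃c.neg)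
    · intro t
      have hder := ((hy' t).mul (hD' t)).sub (hN' t)
      refine hder.congr_deriv ?_
      simp only [hNdef, hDdef]
      field_simp
      ring
    · simp only [hNdef, hDdef]
      rw [mul_zero, neg_zero, Real.exp_zero]
      field_simp
      rw [← hadef]
      ring
  -- D is positive
  have hDpos : ∀ t, 0 < D t := by
    intro t
    have hx : 0 ≤ 1 + a / b := by
      have h := div_nonneg ha1 hbpos.le
      rw [add_div, div_self hbpos.ne'] at h
      linarith
    have hyy : 0 ≤ 1 - a / b := by
      have h := div_nonneg ha2 hbpos.le
      rw [sub_div, div_self hbpos.ne'] at h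
      linarith
    have hm : 0 < min (Real.exp (b * t)) (Real.exp (-(b * t))) :=
      lt_min (Real.exp_pos _) (Real.exp_pos _)
    simp only [hDdef]
    nlinarith [mul_le_mul_of_nonneg_left (min_le_left (Real.exp (b * t)) (Real.exp (-(b * t)))) hx,
      mul_le_mul_of_nonneg_left (min_le_right (Real.exp (b * t)) (Real.exp (-(b * t)))) hyy, hm]
  intro t
  have hD0 : D t ≠ 0 := (hDpos t).ne'
  have := hw t
  show u₃ t = N t / D t
  rw [eq_div_iff hD0]
  linarith [hw t]
end

section
/- Let u₁, u₂, u₃, u₄, u₅ : ℝ → ℝ be differentiable functions satisfying for all t ∈ ℝ: u₁′ = −u₃u₅, u₂′ = u₃u₄, u₃′ = u₁u₅ − u₂u₄, u₄′ = u₂u₃, u₅′ = −u₁u₃. Let U(t) = ∫₀ᵗ u₃(τ) dτ, A = (u₁(0)+u₅(0))² + (u₂(0)−u₄(0))², and B = (u₁(0)−u₅(0))² + (u₂(0)+u₄(0))², and assume A > 0 and B > 0. Define y(t) = 2U(t) + (1/2)·ln(B/A). Then y is twice differentiable and satisfies for all t ∈ ℝ: y″(t) = −√(AB)·sinh(y(t)),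 with y(0) = (1/2)·ln(B/A) and y′(0) = 2u₃(0). -/
private lemma exp_sol (f g V : ℝ → ℝ) (hf : ∀ t, HasDerivAt f (g t * f t) t)
    (hV : ∀ t, HasDerivAt V (g t) t) (hV0 : V 0 = 0) (t : ℝ) :
    f t = f 0 * Real.exp (V t) := by
  have hd : ∀ s, HasDerivAt (fun s => f s * Real.exp (-V s)) 0 s := by
    intro s
    have h1 : HasDerivAt (fun s => Real.exp (-V s)) (Real.exp (-V s) * (-(g s))) s :=
      ((hV s).neg).exp
    have := (hf s).fun_mul h1
    exact this.congr_deriv (by ring)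
  have key : f t * Real.exp (-V t) = f 0 := by
    have := is_const_of_deriv_eq_zero (fun x => (hd x).differentiableAt)
      (fun x => (hd x).deriv) t 0
    simpa [hV0] using this
  have h1 : Real.exp (-V t) * Real.exp (V t) = 1 := by
    rw [← Real.exp_add]; simp
  rw [← key, mul_assoc, h1, mul_one]

/-- In the general case `A > 0`, `B > 0`, the substitution
`y = 2U + (1/2)ln(B/A)` reduces the equation to the pendulum-type ODE
`y'' = -√(AB) sinh y` with `y(0) = (1/2)ln(B/A)`, `y'(0) = 2u₃(0)`. -/
theorem stmt_9 (u₁ u₂ u₃ u₄ u₅ : ℝ → ℝ)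
    (h₁ : ∀ t, HasDerivAt u₁ (-(u₃ t * u₅ t)) t)
    (h₂ : ∀ t, HasDerivAt u₂ (u₃ t * u₄ t) t)
    (h₃ : ∀ t, HasDerivAt u₃ (u₁ t * u₅ t - u₂ t * u₄ t) t)
    (h₄ : ∀ t, HasDerivAt u₄ (u₂ t * u₃ t) t)
    (h₅ : ∀ t, HasDerivAt u₅ (-(u₁ t * u₃ t)) t)
    (U : ℝ → ℝ) (hU : ∀ t, U t = ∫ τ in (0:ℝ)..t, u₃ τ)
    (A B : ℝ)
    (hA : A = (u₁ 0 + u₅ 0) ^ 2 + (u₂ 0 - u₄ 0) ^ 2)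
    (hB : B = (u₁ 0 - u₅ 0) ^ 2 + (u₂ 0 + u₄ 0) ^ 2)
    (hApos : 0 < A) (hBpos : 0 < B)
    (y : ℝ → ℝ) (hy : ∀ t, y t = 2 * U t + 1 / 2 * Real.log (B / A)) :
    (∀ t, HasDerivAt y (2 * u₃ t) t) ∧
    (∀ t, HasDerivAt (deriv y) (-(Real.sqrt (A * B) * Real.sinh (y t))) t) ∧
    y 0 = 1 / 2 * Real.log (B / A) ∧ deriv y 0 = 2 * u₃ 0 := by
  have hu3cont : Continuous u₃ :=
    continuous_iff_continuousAt.mpr fun t => (h₃ t).continuousAt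
  have hUe : U = fun s => ∫ τ in (0:ℝ)..s, u₃ τ := funext hU
  have hUderiv : ∀ t, HasDerivAt U (u₃ t) t := by
    intro t
    rw [hUe]
    exact (hu3cont.integral_hasStrictDerivAt 0 t).hasDerivAt
  have hU0 : U 0 = 0 := by rw [hU 0, intervalIntegral.integral_same]
  have hye : y = fun t => 2 * U t + 1 / 2 * Real.log (B / A) := funext hy
  have hy' : ∀ t, HasDerivAt y (2 * u₃ t) t := by
    intro t
    rw [hye]
    exact ((hUderiv t).const_mul 2).add_const _
  have hderivy : deriv y = fun t => 2 * u₃ t := funext fun t => (hy' t).deriv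
  -- exponential solutions
  have e1 : ∀ t, u₁ t + u₅ t = (u₁ 0 + u₅ 0) * Real.exp (-U t) := by
    intro t
    exact exp_sol (fun s => u₁ s + u₅ s) (fun s => -(u₃ s)) (fun s => -U s)
      (fun s => by have := (h₁ s).fun_add (h₅ s); exact this.congr_deriv (by ring))
      (fun s => (hUderiv s).neg) (by simp [hU0]) t
  have e2 : ∀ t, u₂ t - u₄ t = (u₂ 0 - u₄ 0) * Real.exp (-U t) := by
    intro t
    exact exp_sol (fun s => u₂ s - u₄ s) (fun s => -(u₃ s)) (fun s => -U s)
      (fun s => by have := (h₂ s).fun_sub (h₄ s); exact this.congr_deriv (by ring))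
      (fun s => (hUderiv s).neg) (by simp [hU0]) t
  have e3 : ∀ t, u₁ t - u₅ t = (u₁ 0 - u₅ 0) * Real.exp (U t) := by
    intro t
    exact exp_sol (fun s => u₁ s - u₅ s) (fun s => u₃ s) U
      (fun s => by have := (h₁ s).fun_sub (h₅ s); exact this.congr_deriv (by ring))
      hUderiv hU0 t
  have e4 : ∀ t, u₂ t + u₄ t = (u₂ 0 + u₄ 0) * Real.exp (U t) := by
    intro t
    exact exp_sol (fun s => u₂ s + u₄ s) (fun s => u₃ s) U
      (fun s => by have := (h₂ s).fun_add (h₄ s); exact this.congr_deriv (by ring))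
      hUderiv hU0 t
  have key : ∀ t, 4 * (u₁ t * u₅ t - u₂ t * u₄ t)
      = A * Real.exp (-U t) ^ 2 - B * Real.exp (U t) ^ 2 := by
    intro t
    calc 4 * (u₁ t * u₅ t - u₂ t * u₄ t)
        = (u₁ t + u₅ t) ^ 2 + (u₂ t - u₄ t) ^ 2
          - ((u₁ t - u₅ t) ^ 2 + (u₂ t + u₄ t) ^ 2) := by ring
      _ = A * Real.exp (-U t) ^ 2 - B * Real.exp (U t) ^ 2 := by
          rw [e1 t, e2 t, e3 t, e4 t, hA, hB]; ring
  have hABpos : (0:ℝ) < A * B := mul_pos hApos hBpos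
  have hBA : Real.exp (1 / 2 * Real.log (B / A)) = Real.sqrt (B / A) := by
    rw [Real.sqrt_eq_rpow, Real.rpow_def_of_pos (div_pos hBpos hApos)]
    ring_nf
  have hAB : Real.exp (-(1 / 2 * Real.log (B / A))) = Real.sqrt (A / B) := by
    rw [Real.sqrt_eq_rpow, Real.rpow_def_of_pos (div_pos hApos hBpos)]
    rw [Real.log_div hApos.ne' hBpos.ne', Real.log_div hBpos.ne' hApos.ne']
    ring_nf
  have hsq1 : Real.sqrt (A * B) * Real.sqrt (B / A) = B := by
    rw [← Real.sqrt_mul hABpos.le]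
    have : A * B * (B / A) = B ^ 2 := by field_simp
    rw [this, Real.sqrt_sq hBpos.le]
  have hsq2 : Real.sqrt (A * B) * Real.sqrt (A / B) = A := by
    rw [← Real.sqrt_mul hABpos.le]
    have : A * B * (A / B) = A ^ 2 := by field_simp
    rw [this, Real.sqrt_sq hApos.le]
  have hexpy : ∀ t, Real.sqrt (A * B) * Real.exp (y t) = B * Real.exp (U t) ^ 2 := by
    intro t
    rw [hy t, show 2 * U t + 1 / 2 * Real.log (B / A)
        = U t + U t + 1 / 2 * Real.log (B / A) by ring,
      Real.exp_add, Real.exp_add, hBA]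
    linear_combination Real.exp (U t) ^ 2 * hsq1
  have hexpny : ∀ t, Real.sqrt (A * B) * Real.exp (-y t) = A * Real.exp (-U t) ^ 2 := by
    intro t
    rw [hy t, show -(2 * U t + 1 / 2 * Real.log (B / A))
        = -U t + -U t + -(1 / 2 * Real.log (B / A)) by ring,
      Real.exp_add, Real.exp_add, hAB]
    linear_combination Real.exp (-U t) ^ 2 * hsq2
  refine ⟨hy', ?_, ?_, (hy' 0).deriv⟩
  · intro t
    have hd : HasDerivAt (deriv y) (2 * (u₁ t * u₅ t - u₂ t * u₄ t)) t := by
      rw [hderivy]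
      exact (h₃ t).const_mul 2
    have heq : -(Real.sqrt (A * B) * Real.sinh (y t)) = 2 * (u₁ t * u₅ t - u₂ t * u₄ t) := by
      rw [Real.sinh_eq]
      linear_combination (1/2) * hexpny t - (1/2) * hexpy t - (1/2) * key t
    rw [heq]
    exact hd
  · rw [hy 0, hU0]; ring
end

section
/- Let u₁, u₂, u₃, u₄, u₅, u₆, x, y, z, θ, β, α : ℝ → ℝ be differentiable functions satisfying for all t ∈ ℝ the Hamiltonian system: u₁′ = −u₃u₅, u₂′ = u₃u₄, u₃′ = u₁u₅ − u₂u₄, u₄′ = u₂u₃ − u₅u₆, u₅′ = u₄u₆ − u₁u₃, u₆′ = 0, x′ = u₃ sin β, y′ = −u₃ cos β sin θ, z′ = u₃ cos β cos θ, θ′ = sec β·(u₄ cos α − u₅ sin α), β′ = u₄ sin α + u₅ cos α, α′ = −(u₄ cos α − u₅ sin α)·tan β, and assume cos β(t) ≠ 0 for all t ∈ ℝ. Then the right-invariant Hamiltonian ρ₁(t) = −u₁(t) cos α(t) cos β(t) + u₂(t) cos β(t) sin α(t) − u₃(t) sin β(t) is constant in t. -/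
/-- The right-invariant Hamiltonian ρ₁ = -u₁ cos α cos β + u₂ cos β sin α - u₃ sin β is a first integral of the full
Hamiltonian system of PMP for the sub-Riemannian problem on SE(3). -/
theorem stmt_13 (u₁ u₂ u₃ u₄ u₅ u₆ x y z θ β α : ℝ → ℝ)
    (h₁ : ∀ t, HasDerivAt u₁ (-(u₃ t * u₅ t)) t)
    (h₂ : ∀ t, HasDerivAt u₂ (u₃ t * u₄ t) t)
    (h₃ : ∀ t, HasDerivAt u₃ (u₁ t * u₅ t - u₂ t * u₄ t) t)
    (h₄ : ∀ t, HasDerivAt u₄ (u₂ t * u₃ t - u₅ t * u₆ t) t)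
    (h₅ : ∀ t, HasDerivAt u₅ (u₄ t * u₆ t - u₁ t * u₃ t) t)
    (h₆ : ∀ t, HasDerivAt u₆ 0 t)
    (hx : ∀ t, HasDerivAt x (u₃ t * Real.sin (β t)) t)
    (hy : ∀ t, HasDerivAt y (-(u₃ t * Real.cos (β t) * Real.sin (θ t))) t)
    (hz : ∀ t, HasDerivAt z (u₃ t * Real.cos (β t) * Real.cos (θ t)) t)
    (hθ : ∀ t, HasDerivAt θ
      ((Real.cos (β t))⁻¹ * (u₄ t * Real.cos (α t) - u₅ t * Real.sin (α t))) t)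
    (hβ : ∀ t, HasDerivAt β (u₄ t * Real.sin (α t) + u₅ t * Real.cos (α t)) t)
    (hα : ∀ t, HasDerivAt α
      (-((u₄ t * Real.cos (α t) - u₅ t * Real.sin (α t)) * Real.tan (β t))) t)
    (hcosβ : ∀ t : ℝ, Real.cos (β t) ≠ 0) :
    ∀ t : ℝ,
      (fun s => -(u₁ s * Real.cos (α s) * Real.cos (β s)) + u₂ s * Real.cos (β s) * Real.sin (α s) - u₃ s * Real.sin (β s)) t
      = (fun s => -(u₁ s * Real.cos (α s) * Real.cos (β s)) + u₂ s * Real.cos (β s) * Real.sin (α s) - u₃ s * Real.sin (β s)) 0 := by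
  have key : ∀ t : ℝ, HasDerivAt
      (fun s => -(u₁ s * Real.cos (α s) * Real.cos (β s)) + u₂ s * Real.cos (β s) * Real.sin (α s) - u₃ s * Real.sin (β s)) 0 t := by
    intro t
    have hca : HasDerivAt (fun s => Real.cos (α s))
        (-Real.sin (α t) * (-((u₄ t * Real.cos (α t) - u₅ t * Real.sin (α t)) * Real.tan (β t)))) t :=
      (Real.hasDerivAt_cos (α t)).comp t (hα t)
    have hsa : HasDerivAt (fun s => Real.sin (α s))
        (Real.cos (α t) * (-((u₄ t * Real.cos (α t) - u₅ t * Real.sin (α t)) * Real.tan (β t)))) t :=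
      (Real.hasDerivAt_sin (α t)).comp t (hα t)
    have hcb : HasDerivAt (fun s => Real.cos (β s))
        (-Real.sin (β t) * (u₄ t * Real.sin (α t) + u₅ t * Real.cos (α t))) t :=
      (Real.hasDerivAt_cos (β t)).comp t (hβ t)
    have hsb : HasDerivAt (fun s => Real.sin (β s))
        (Real.cos (β t) * (u₄ t * Real.sin (α t) + u₅ t * Real.cos (α t))) t :=
      (Real.hasDerivAt_sin (β t)).comp t (hβ t)
    have H := (((((h₁ t).mul hca).mul hcb).neg.add (((h₂ t).mul hcb).mul hsa)).sub
      ((h₃ t).mul hsb))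
    convert H using 1
    case e'_4 => rfl
    case e'_5 => rfl
    case e'_8 => rfl
    simp only [Pi.mul_apply]
    rw [Real.tan_eq_sin_div_cos]
    field_simp [hcosβ t]
    linear_combination (Real.sin (β t) * u₄ t * u₂ t -
      Real.sin (β t) * u₁ t * u₅ t) * Real.sin_sq_add_cos_sq (α t)
  intro t
  have : (fun s => -(u₁ s * Real.cos (α s) * Real.cos (β s)) + u₂ s * Real.cos (β s) * Real.sin (α s) - u₃ s * Real.sin (β s)) t
      = (fun s => -(u₁ s * Real.cos (α s) * Real.cos (β s)) + u₂ s * Real.cos (β s) * Real.sin (α s) - u₃ s * Real.sin (β s)) 0 :=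
    is_const_of_deriv_eq_zero (fun s => (key s).differentiableAt)
      (fun s => (key s).deriv) t 0
  exact this
end

section
/- Let u₁, u₂, u₃, u₄, u₅, u₆, x, y, z, θ, β, α : ℝ → ℝ be differentiable functions satisfying for all t ∈ ℝ the Hamiltonian system: u₁′ = −u₃u₅, u₂′ = u₃u₄, u₃′ = u₁u₅ − u₂u₄, u₄′ = u₂u₃ − u₅u₆, u₅′ = u₄u₆ − u₁u₃, u₆′ = 0, x′ = u₃ sin β, y′ = −u₃ cos β sin θ, z′ = u₃ cos β cos θ, θ′ = sec β·(u₄ cos α − u₅ sin α), β′ = u₄ sin α + u₅ cos α, α′ = −(u₄ cos α − u₅ sin α)·tan β, and assume cos β(t) ≠ 0 for all t ∈ ℝ. Then the right-invariant Hamiltonian ρ₂(t) = −cos θ(t)·(u₂(t) cos α(t) + u₁(t) sin α(t)) + (u₃(t) cos β(t) + (−u₁(t) cos α(t) + u₂(t) sin α(t))·sin β(t))·sin θ(t) is constant in t. -/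
/-- The right-invariant Hamiltonian ρ₂ is a first integral of the full
Hamiltonian system of PMP for the sub-Riemannian problem on SE(3). -/
theorem stmt_14 (u₁ u₂ u₃ u₄ u₅ u₆ x y z θ β α : ℝ → ℝ)
    (h₁ : ∀ t, HasDerivAt u₁ (-(u₃ t * u₅ t)) t)
    (h₂ : ∀ t, HasDerivAt u₂ (u₃ t * u₄ t) t)
    (h₃ : ∀ t, HasDerivAt u₃ (u₁ t * u₅ t - u₂ t * u₄ t) t)
    (h₄ : ∀ t, HasDerivAt u₄ (u₂ t * u₃ t - u₅ t * u₆ t) t)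
    (h₅ : ∀ t, HasDerivAt u₅ (u₄ t * u₆ t - u₁ t * u₃ t) t)
    (h₆ : ∀ t, HasDerivAt u₆ 0 t)
    (hx : ∀ t, HasDerivAt x (u₃ t * Real.sin (β t)) t)
    (hy : ∀ t, HasDerivAt y (-(u₃ t * Real.cos (β t) * Real.sin (θ t))) t)
    (hz : ∀ t, HasDerivAt z (u₃ t * Real.cos (β t) * Real.cos (θ t)) t)
    (hθ : ∀ t, HasDerivAt θ
      ((Real.cos (β t))⁻¹ * (u₄ t * Real.cos (α t) - u₅ t * Real.sin (α t))) t)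
    (hβ : ∀ t, HasDerivAt β (u₄ t * Real.sin (α t) + u₅ t * Real.cos (α t)) t)
    (hα : ∀ t, HasDerivAt α
      (-((u₄ t * Real.cos (α t) - u₅ t * Real.sin (α t)) * Real.tan (β t))) t)
    (hcosβ : ∀ t : ℝ, Real.cos (β t) ≠ 0) :
    ∀ t : ℝ,
      (fun s => -(Real.cos (θ s) * (u₂ s * Real.cos (α s) + u₁ s * Real.sin (α s))) + (u₃ s * Real.cos (β s) + (-(u₁ s * Real.cos (α s)) + u₂ s * Real.sin (α s)) * Real.sin (β s)) * Real.sin (θ s)) t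
      = (fun s => -(Real.cos (θ s) * (u₂ s * Real.cos (α s) + u₁ s * Real.sin (α s))) + (u₃ s * Real.cos (β s) + (-(u₁ s * Real.cos (α s)) + u₂ s * Real.sin (α s)) * Real.sin (β s)) * Real.sin (θ s)) 0  := by
  have key : ∀ t : ℝ, HasDerivAt (fun s => -(Real.cos (θ s) * (u₂ s * Real.cos (α s) + u₁ s * Real.sin (α s))) + (u₃ s * Real.cos (β s) + (-(u₁ s * Real.cos (α s)) + u₂ s * Real.sin (α s)) * Real.sin (β s)) * Real.sin (θ s)) 0 t := by
    intro t
    have hct : HasDerivAt (fun s => Real.cos (θ s))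
        (-Real.sin (θ t) * ((Real.cos (β t))⁻¹ * (u₄ t * Real.cos (α t) - u₅ t * Real.sin (α t)))) t :=
      (Real.hasDerivAt_cos (θ t)).comp t (hθ t)
    have hst : HasDerivAt (fun s => Real.sin (θ s))
        (Real.cos (θ t) * ((Real.cos (β t))⁻¹ * (u₄ t * Real.cos (α t) - u₅ t * Real.sin (α t)))) t :=
      (Real.hasDerivAt_sin (θ t)).comp t (hθ t)
    have hca : HasDerivAt (fun s => Real.cos (α s))
        (-Real.sin (α t) * (-((u₄ t * Real.cos (α t) - u₅ t * Real.sin (α t)) * Real.tan (β t)))) t :=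
      (Real.hasDerivAt_cos (α t)).comp t (hα t)
    have hsa : HasDerivAt (fun s => Real.sin (α s))
        (Real.cos (α t) * (-((u₄ t * Real.cos (α t) - u₅ t * Real.sin (α t)) * Real.tan (β t)))) t :=
      (Real.hasDerivAt_sin (α t)).comp t (hα t)
    have hcb : HasDerivAt (fun s => Real.cos (β s))
        (-Real.sin (β t) * (u₄ t * Real.sin (α t) + u₅ t * Real.cos (α t))) t :=
      (Real.hasDerivAt_cos (β t)).comp t (hβ t)
    have hsb : HasDerivAt (fun s => Real.sin (β s))
        (Real.cos (β t) * (u₄ t * Real.sin (α t) + u₅ t * Real.cos (α t))) t :=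
      (Real.hasDerivAt_sin (β t)).comp t (hβ t)
    have H := ((hct.mul (((h₂ t).mul hca).add ((h₁ t).mul hsa))).neg.add
      ((((h₃ t).mul hcb).add ((((h₁ t).mul hca).neg.add ((h₂ t).mul hsa)).mul hsb)).mul hst))
    convert H using 1
    case e'_4 => rfl
    case e'_5 => rfl
    case e'_8 => rfl
    simp only [Pi.mul_apply, Pi.add_apply, Pi.neg_apply]
    have hc := hcosβ t
    have pa := Real.sin_sq_add_cos_sq (α t)
    have pb := Real.sin_sq_add_cos_sq (β t)
    rw [Real.tan_eq_sin_div_cos]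
    field_simp
    ring_nf
    have hsa2 : Real.sin (α t) ^ 2 = 1 - Real.cos (α t) ^ 2 := by linarith [pa]
    have hsb2 : Real.sin (β t) ^ 2 = 1 - Real.cos (β t) ^ 2 := by linarith [pb]
    rw [hsa2, hsb2]
    ring
  intro t
  have hd : Differentiable ℝ (fun s => -(Real.cos (θ s) * (u₂ s * Real.cos (α s) + u₁ s * Real.sin (α s))) + (u₃ s * Real.cos (β s) + (-(u₁ s * Real.cos (α s)) + u₂ s * Real.sin (α s)) * Real.sin (β s)) * Real.sin (θ s)) :=
    fun s => (key s).differentiableAt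
  exact is_const_of_deriv_eq_zero hd (fun s => (key s).deriv) t 0
end

section
/- Let u₁, u₂, u₃, u₄, u₅, u₆, x, y, z, θ, β, α : ℝ → ℝ be differentiable functions satisfying for all t ∈ ℝ the Hamiltonian system: u₁′ = −u₃u₅, u₂′ = u₃u₄, u₃′ = u₁u₅ − u₂u₄, u₄′ = u₂u₃ − u₅u₆, u₅′ = u₄u₆ − u₁u₃, u₆′ = 0, x′ = u₃ sin β, y′ = −u₃ cos β sin θ, z′ = u₃ cos β cos θ, θ′ = sec β·(u₄ cos α − u₅ sin α), β′ = u₄ sin α + u₅ cos α, α′ = −(u₄ cos α − u₅ sin α)·tan β, and assume cos β(t) ≠ 0 for all t ∈ ℝ. Then the right-invariant Hamiltonian ρ₃(t) = −u₃(t) cos β(t) cos θ(t) + cos θ(t)·(u₁(t) cos α(t) − u₂(t) sin α(t))·sin β(t) − (u₂(t) cos α(t) + u₁(t) sin α(t))·sin θ(t) is constant in t. -/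
/-- The right-invariant Hamiltonian ρ₃ is a first integral of the full
Hamiltonian system of PMP for the sub-Riemannian problem on SE(3). -/
theorem stmt_15 (u₁ u₂ u₃ u₄ u₅ u₆ x y z θ β α : ℝ → ℝ)
    (h₁ : ∀ t, HasDerivAt u₁ (-(u₃ t * u₅ t)) t)
    (h₂ : ∀ t, HasDerivAt u₂ (u₃ t * u₄ t) t)
    (h₃ : ∀ t, HasDerivAt u₃ (u₁ t * u₅ t - u₂ t * u₄ t) t)
    (h₄ : ∀ t, HasDerivAt u₄ (u₂ t * u₃ t - u₅ t * u₆ t) t)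
    (h₅ : ∀ t, HasDerivAt u₅ (u₄ t * u₆ t - u₁ t * u₃ t) t)
    (h₆ : ∀ t, HasDerivAt u₆ 0 t)
    (hx : ∀ t, HasDerivAt x (u₃ t * Real.sin (β t)) t)
    (hy : ∀ t, HasDerivAt y (-(u₃ t * Real.cos (β t) * Real.sin (θ t))) t)
    (hz : ∀ t, HasDerivAt z (u₃ t * Real.cos (β t) * Real.cos (θ t)) t)
    (hθ : ∀ t, HasDerivAt θ
      ((Real.cos (β t))⁻¹ * (u₄ t * Real.cos (α t) - u₅ t * Real.sin (α t))) t)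
    (hβ : ∀ t, HasDerivAt β (u₄ t * Real.sin (α t) + u₅ t * Real.cos (α t)) t)
    (hα : ∀ t, HasDerivAt α
      (-((u₄ t * Real.cos (α t) - u₅ t * Real.sin (α t)) * Real.tan (β t))) t)
    (hcosβ : ∀ t : ℝ, Real.cos (β t) ≠ 0) :
    ∀ t : ℝ,
      (fun s => -(u₃ s * Real.cos (β s) * Real.cos (θ s)) + Real.cos (θ s) * (u₁ s * Real.cos (α s) - u₂ s * Real.sin (α s)) * Real.sin (β s) - (u₂ s * Real.cos (α s) + u₁ s * Real.sin (α s)) * Real.sin (θ s)) t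
      = (fun s => -(u₃ s * Real.cos (β s) * Real.cos (θ s)) + Real.cos (θ s) * (u₁ s * Real.cos (α s) - u₂ s * Real.sin (α s)) * Real.sin (β s) - (u₂ s * Real.cos (α s) + u₁ s * Real.sin (α s)) * Real.sin (θ s)) 0 := by
  set F : ℝ → ℝ := fun s => -(u₃ s * Real.cos (β s) * Real.cos (θ s)) + Real.cos (θ s) * (u₁ s * Real.cos (α s) - u₂ s * Real.sin (α s)) * Real.sin (β s) - (u₂ s * Real.cos (α s) + u₁ s * Real.sin (α s)) * Real.sin (θ s) with hF
  have key : ∀ t, HasDerivAt F 0 t := by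
    intro t
    have hcβ := (Real.hasDerivAt_cos (β t)).comp t (hβ t)
    have hsβ := (Real.hasDerivAt_sin (β t)).comp t (hβ t)
    have hcθ := (Real.hasDerivAt_cos (θ t)).comp t (hθ t)
    have hsθ := (Real.hasDerivAt_sin (θ t)).comp t (hθ t)
    have hcα := (Real.hasDerivAt_cos (α t)).comp t (hα t)
    have hsα := (Real.hasDerivAt_sin (α t)).comp t (hα t)
    have H := ((((h₃ t).mul hcβ).mul hcθ).neg.add
      ((hcθ.mul (((h₁ t).mul hcα).sub ((h₂ t).mul hsα))).mul hsβ)).sub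
      ((((h₂ t).mul hcα).add ((h₁ t).mul hsα)).mul hsθ)
    convert H using 1
    case e'_4 => rfl
    case e'_5 => rfl
    case e'_8 => rfl
    have hc := hcosβ t
    have p : Real.sin (β t) ^ 2 = 1 - Real.cos (β t) ^ 2 := by
      nlinarith [Real.sin_sq_add_cos_sq (β t)]
    simp only [Function.comp_apply, Pi.mul_apply, Pi.sub_apply, Pi.add_apply, Real.tan_eq_sin_div_cos]
    field_simp [Real.tan_eq_sin_div_cos]
    linear_combination (-(Real.cos (θ t) * Real.cos (β t) ^ 2 * (u₁ t * u₅ t - u₂ t * u₄ t))) *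
      Real.sin_sq_add_cos_sq (α t)
      - Real.cos (θ t) * (u₄ t * Real.cos (α t) - u₅ t * Real.sin (α t)) *
      (u₂ t * Real.cos (α t) + u₁ t * Real.sin (α t)) * Real.sin_sq_add_cos_sq (β t)
  intro t
  have := is_const_of_deriv_eq_zero (fun s => (key s).differentiableAt) (fun s => (key s).deriv) t 0
  simpa using this
end
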